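/- Let a, b, q ∈ ℂ with q purely imaginary (Re q = 0) and |q| = 1, and let B ∈ M₂(ℂ) be the matrix with entries B₁₁ = 0, B₁₂ = q, B₂₁ = b, B₂₂ = a, where M₂(ℂ) carries the operator norm induced by the Euclidean norm on ℂ². Then ‖B‖² = (√((|a|² + |b|² + 1)² − 4|b|²) + |a|² + |b|² + 1)/2; moreover, setting λ = ‖B‖² − 1 − |a|² and x = (a·λ, conj(a)·b·a) ∈ ℂ², one has ‖Bx‖ = ‖B‖·‖x‖ and Re⟨Bx, E₁₂x⟩ = 0, where E₁₂ is the matrix unit with 1 in position (1,2). -/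

import Mathlib

set_option maxHeartbeats 1000000

open scoped Matrix.Norms.L2Operator

lemma eucl_norm_sq' (v : EuclideanSpace ℂ (Fin 2)) : ‖v‖^2 = ‖v 0‖^2 + ‖v 1‖^2 := by
  rw [EuclideanSpace.norm_eq, Real.sq_sqrt (by positivity)]
  simp [Fin.sum_univ_two]

lemma toEL_apply' (p q r s : ℂ) (v : EuclideanSpace ℂ (Fin 2)) :
    Matrix.toEuclideanLin !![p, q; r, s] v =
      (WithLp.equiv 2 (Fin 2 → ℂ)).symm ![p * v 0 + q * v 1, r * v 0 + s * v 1] := by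
  rw [Matrix.toEuclideanLin_apply]
  congr 1
  funext i
  fin_cases i <;> simp [Matrix.mulVec, dotProduct, Fin.sum_univ_two, Matrix.vecHead, Matrix.vecTail]

lemma symm_apply' (f : Fin 2 → ℂ) (i : Fin 2) :
    ((WithLp.equiv 2 (Fin 2 → ℂ)).symm f) i = f i := rfl

/-- For `q ∈ ℂ` purely imaginary and unimodular, the norm of `B = !![0, q; b, a]` in the
Euclidean operator norm is given by the stated formula, and with
`λ = ‖B‖² − 1 − |a|²` and `x = (a·λ, conj(a)·b·a)`, the vector `x` is norm-attaining for `B`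
and `Re⟨Bx, E₁₂x⟩ = 0`. -/
theorem norm_and_orthogonality_q_matrix' (a b q : ℂ) (hqim : q.re = 0) (hq : ‖q‖ = 1)
    (B : Matrix (Fin 2) (Fin 2) ℂ) (hB : B = !![0, q; b, a])
    (lam : ℝ) (hlam : lam = ‖B‖ ^ 2 - 1 - ‖a‖ ^ 2)
    (x : EuclideanSpace ℂ (Fin 2))
    (hx : x = (WithLp.equiv 2 (Fin 2 → ℂ)).symm ![a * (lam : ℂ), starRingEnd ℂ a * b * a]) :
    ‖B‖ ^ 2 = (Real.sqrt ((‖a‖ ^ 2 + ‖b‖ ^ 2 + 1) ^ 2 - 4 * ‖b‖ ^ 2)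
        + ‖a‖ ^ 2 + ‖b‖ ^ 2 + 1) / 2 ∧
    ‖Matrix.toEuclideanLin B x‖ = ‖B‖ * ‖x‖ ∧
    (inner (𝕜 := ℂ) (Matrix.toEuclideanLin (Matrix.single 0 1 (1 : ℂ)) x)
        (Matrix.toEuclideanLin B x)).re = 0 := by
  have hA0 : (0:ℝ) ≤ ‖a‖ := norm_nonneg a
  have hB0 : (0:ℝ) ≤ ‖b‖ := norm_nonneg b
  set A := ‖a‖ with hAdef
  set Bn := ‖b‖ with hBndef
  have hdisc : 0 ≤ (A^2 + Bn^2 + 1)^2 - 4*Bn^2 := by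
    nlinarith [sq_nonneg (A^2 + Bn^2 - 1), sq_nonneg A, sq_nonneg Bn, sq_nonneg (A*Bn)]
  set D := Real.sqrt ((A^2 + Bn^2 + 1)^2 - 4*Bn^2) with hD
  have hD0 : 0 ≤ D := Real.sqrt_nonneg _
  have hD2 : D^2 = (A^2 + Bn^2 + 1)^2 - 4*Bn^2 := Real.sq_sqrt hdisc
  set N := (D + A^2 + Bn^2 + 1)/2 with hN
  have hQ : N^2 - (A^2+Bn^2+1)*N + Bn^2 = 0 := by
    rw [hN]; linear_combination hD2 / 4
  have hNA : 1 + A^2 ≤ N := by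
    rw [hN]; nlinarith [hD2, hD0, sq_nonneg (A*Bn)]
  have hNB : Bn^2 ≤ N := by
    rw [hN]; nlinarith [hD2, hD0, sq_nonneg (A*Bn)]
  have hN0 : (0:ℝ) ≤ N := by nlinarith
  clear_value D N
  have haa : a * (starRingEnd ℂ) a = ((A : ℝ) : ℂ)^2 := by
    rw [Complex.mul_conj, Complex.normSq_eq_norm_sq]
    push_cast
    rfl
  -- upper bound
  have upper : ‖B‖ ≤ Real.sqrt N := by
    set s := Real.sqrt (N - Bn^2) with hs
    set t := Real.sqrt (N - 1 - A^2) with ht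
    have hs2 : s^2 = N - Bn^2 := Real.sq_sqrt (by linarith)
    have ht2 : t^2 = N - 1 - A^2 := Real.sq_sqrt (by linarith)
    clear_value s t
    have hst : s * t = A * Bn := by
      rw [hs, ht, ← Real.sqrt_mul (by linarith)]
      rw [show (N - Bn^2) * (N - 1 - A^2) = (A*Bn)^2 by linear_combination hQ]
      exact Real.sqrt_sq (by positivity)
    rw [Matrix.l2_opNorm_def]
    apply ContinuousLinearMap.opNorm_le_bound _ (Real.sqrt_nonneg N)
    intro y
    simp only [LinearEquiv.trans_apply, LinearMap.coe_toContinuousLinearMap']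
    have hsq : ‖Matrix.toEuclideanLin B y‖^2 ≤ N * ‖y‖^2 := by
      rw [hB, toEL_apply', eucl_norm_sq', symm_apply', symm_apply']
      simp only [Matrix.cons_val_zero, Matrix.cons_val_one, Matrix.head_cons]
      set u := ‖y 0‖ with hu
      set v := ‖y 1‖ with hv
      have hu0 : 0 ≤ u := norm_nonneg _
      have hv0 : 0 ≤ v := norm_nonneg _
      have h1 : ‖(0:ℂ) * y 0 + q * y 1‖ = v := by
        rw [zero_mul, zero_add, norm_mul, hq, one_mul]
      have h2 : ‖b * y 0 + a * y 1‖ ≤ Bn * u + A * v := by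
        refine (norm_add_le _ _).trans ?_
        rw [norm_mul, norm_mul]
      have h2' : ‖b * y 0 + a * y 1‖^2 ≤ (Bn * u + A * v)^2 :=
        pow_le_pow_left₀ (norm_nonneg _) h2 2
      have key : 2*(A*Bn)*(u*v) ≤ (N - Bn^2)*u^2 + (N - 1 - A^2)*v^2 := by
        rw [← hst, ← hs2, ← ht2]
        nlinarith [sq_nonneg (s*u - t*v)]
      rw [eucl_norm_sq' y, h1]
      nlinarith [h2', key]
    calc ‖Matrix.toEuclideanLin B y‖
        = Real.sqrt (‖Matrix.toEuclideanLin B y‖^2) := (Real.sqrt_sq (norm_nonneg _)).symm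
      _ ≤ Real.sqrt (N * ‖y‖^2) := Real.sqrt_le_sqrt hsq
      _ = Real.sqrt N * ‖y‖ := by
          rw [Real.sqrt_mul hN0, Real.sqrt_sq (norm_nonneg _)]
  -- lower bound
  have lower : Real.sqrt N ≤ ‖B‖ := by
    obtain ⟨v, hv0, hvB⟩ : ∃ v : EuclideanSpace ℂ (Fin 2), v ≠ 0 ∧
        ‖Matrix.toEuclideanLin B v‖^2 = N * ‖v‖^2 := by
      rcases eq_or_ne (N - 1 - A^2) 0 with hl | hl
      · refine ⟨(WithLp.equiv 2 (Fin 2 → ℂ)).symm ![0, 1], ?_, ?_⟩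
        · intro h
          have := congrFun (congrArg (WithLp.equiv 2 (Fin 2 → ℂ)) h) 1
          simp at this
        · rw [hB, toEL_apply', eucl_norm_sq', eucl_norm_sq', symm_apply', symm_apply',
            symm_apply', symm_apply']
          simp only [Matrix.cons_val_zero, Matrix.cons_val_one, Matrix.head_cons,
            mul_zero, mul_one, zero_add, add_zero, zero_mul]
          rw [hq]
          simp only [norm_zero, norm_one]
          nlinarith [hl]
      · refine ⟨(WithLp.equiv 2 (Fin 2 → ℂ)).symm
          ![((N - 1 - A^2 : ℝ) : ℂ), (starRingEnd ℂ) a * b], ?_, ?_⟩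
        · intro h
          have h0 := congrFun (congrArg (WithLp.equiv 2 (Fin 2 → ℂ)) h) 0
          simp only [Equiv.apply_symm_apply] at h0
          have : ((N - 1 - A^2 : ℝ) : ℂ) = 0 := by simpa using h0
          exact hl (by exact_mod_cast this)
        · rw [hB, toEL_apply', eucl_norm_sq', eucl_norm_sq', symm_apply', symm_apply',
            symm_apply', symm_apply']
          simp only [Matrix.cons_val_zero, Matrix.cons_val_one, Matrix.head_cons]
          have e1 : (0:ℂ) * ((N - 1 - A^2 : ℝ) : ℂ) + q * ((starRingEnd ℂ) a * b)
              = q * ((starRingEnd ℂ) a * b) := by ring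
          have e2 : b * ((N - 1 - A^2 : ℝ) : ℂ) + a * ((starRingEnd ℂ) a * b)
              = b * ((N - 1 : ℝ) : ℂ) := by
            push_cast
            linear_combination b * haa
          rw [e1, e2]
          rw [norm_mul, norm_mul, norm_mul, hq, one_mul, RCLike.norm_conj,
            Complex.norm_real, Complex.norm_real, Real.norm_eq_abs, Real.norm_eq_abs]
          rw [abs_of_nonneg (by nlinarith : (0:ℝ) ≤ N - 1)]
          rw [← hAdef, ← hBndef, sq_abs]
          linear_combination (A^2 + 1 - N) * hQ
    have hvpos : 0 < ‖v‖ := norm_pos_iff.mpr hv0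
    have hle : ‖Matrix.toEuclideanLin B v‖ ≤ ‖B‖ * ‖v‖ := by
      rw [Matrix.l2_opNorm_def]
      have := (LinearEquiv.trans (Matrix.toEuclideanLin (𝕜 := ℂ) (m := Fin 2) (n := Fin 2))
        LinearMap.toContinuousLinearMap B).le_opNorm v
      simpa using this
    have hnv : ‖Matrix.toEuclideanLin B v‖ = Real.sqrt N * ‖v‖ := by
      have h1 : ‖Matrix.toEuclideanLin B v‖ = Real.sqrt (N * ‖v‖^2) := by
        rw [← hvB, Real.sqrt_sq (norm_nonneg _)]
      rw [h1, Real.sqrt_mul hN0, Real.sqrt_sq (norm_nonneg _)]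
    rw [hnv] at hle
    exact le_of_mul_le_mul_right hle hvpos
  have hBN : ‖B‖ = Real.sqrt N := le_antisymm upper lower
  have hB2 : ‖B‖^2 = N := by rw [hBN, Real.sq_sqrt hN0]
  refine ⟨hB2, ?_, ?_⟩
  · -- norm attaining
    rw [hB2] at hlam
    have hx0 : x 0 = a * (lam : ℂ) := by rw [hx]; rfl
    have hx1 : x 1 = (starRingEnd ℂ) a * b * a := by rw [hx]; rfl
    have hBx : Matrix.toEuclideanLin B x =
        (WithLp.equiv 2 (Fin 2 → ℂ)).symm
          ![q * ((starRingEnd ℂ) a * b * a), a * b * ((N - 1 : ℝ) : ℂ)] := by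
      rw [hB, toEL_apply', hx0, hx1]
      have e1 : (0:ℂ) * (a * (lam:ℂ)) + q * ((starRingEnd ℂ) a * b * a)
          = q * ((starRingEnd ℂ) a * b * a) := by ring
      have e2 : b * (a * (lam:ℂ)) + a * ((starRingEnd ℂ) a * b * a)
          = a * b * ((N - 1 : ℝ) : ℂ) := by
        rw [hlam]
        push_cast
        linear_combination a * b * haa
      rw [e1, e2]
    have hxn : ‖x‖^2 = A^2 * lam^2 + (A^2*Bn)^2 := by
      rw [eucl_norm_sq', hx0, hx1]
      rw [norm_mul, norm_mul, norm_mul, RCLike.norm_conj, Complex.norm_real,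
        Real.norm_eq_abs, mul_pow, sq_abs, ← hAdef, ← hBndef]
      ring
    have n1 : ‖q * ((starRingEnd ℂ) a * b * a)‖ = A * Bn * A := by
      rw [norm_mul, norm_mul, norm_mul, hq, one_mul, RCLike.norm_conj, ← hAdef, ← hBndef]
    have n2 : ‖a * b * ((N - 1 : ℝ) : ℂ)‖ = A * Bn * (N - 1) := by
      rw [norm_mul, norm_mul, Complex.norm_real, Real.norm_eq_abs,
        abs_of_nonneg (by nlinarith : (0:ℝ) ≤ N - 1), ← hAdef, ← hBndef]
    have hBxn : ‖Matrix.toEuclideanLin B x‖^2 = (A*Bn*A)^2 + (A*Bn*(N-1))^2 := by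
      rw [hBx, eucl_norm_sq', symm_apply', symm_apply']
      simp only [Matrix.cons_val_zero, Matrix.cons_val_one, Matrix.head_cons]
      rw [n1, n2]
    have hkey : ‖Matrix.toEuclideanLin B x‖^2 = (‖B‖ * ‖x‖)^2 := by
      rw [hBxn, show (‖B‖ * ‖x‖)^2 = ‖B‖^2 * ‖x‖^2 from mul_pow _ _ 2, hB2, hxn, hlam]
      linear_combination (A^2*(A^2 + 1 - N)) * hQ
    calc ‖Matrix.toEuclideanLin B x‖
        = Real.sqrt (‖Matrix.toEuclideanLin B x‖^2) := (Real.sqrt_sq (norm_nonneg _)).symm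
      _ = Real.sqrt ((‖B‖ * ‖x‖)^2) := by rw [hkey]
      _ = ‖B‖ * ‖x‖ := Real.sqrt_sq (by positivity)
  · -- orthogonality
    have hE : (Matrix.single 0 1 (1:ℂ) : Matrix (Fin 2) (Fin 2) ℂ)
        = !![0, 1; 0, 0] := by
      ext i j
      fin_cases i <;> fin_cases j <;> simp [Matrix.single]
    rw [hE, hB, toEL_apply', toEL_apply']
    rw [PiLp.inner_apply]
    simp only [Fin.sum_univ_two, symm_apply', Matrix.cons_val_zero, Matrix.cons_val_one,
      Matrix.head_cons, RCLike.inner_apply]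
    have hsimp : (starRingEnd ℂ) ((0:ℂ) * x 0 + 1 * x 1) * ((0:ℂ) * x 0 + q * x 1)
        + (starRingEnd ℂ) ((0:ℂ) * x 0 + (0:ℂ) * x 1) * (b * x 0 + a * x 1)
        = q * (x 1 * (starRingEnd ℂ) (x 1)) := by
      rw [map_add, map_add, map_mul, map_mul, map_mul]
      simp only [map_zero, map_one]
      ring
    rw [mul_comm ((0:ℂ) * x 0 + q * x 1), mul_comm (b * x 0 + a * x 1), hsimp, Complex.mul_conj]
    simp [Complex.mul_re, hqim]
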